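/- The Douglas–Rachford operator T satisfies T T* = P_V P_U P_V + P_{V^⊥} P_{U^⊥} P_{V^⊥} = P_V P_U + P_U P_V − P_U − P_V + Id = P_U P_V P_U + P_{U^⊥} P_{V^⊥} P_{U^⊥}. -/

import Mathlib

noncomputable section

variable {X : Type*} [NormedAddCommGroup X] [InnerProductSpace ℝ X] [CompleteSpace X]

/-- The orthogonal projection onto a closed subspace `W`, as an operator on `X`. -/
noncomputable def proj (W : Submodule ℝ X) [Submodule.HasOrthogonalProjection W] : X →L[ℝ] X :=
  W.subtypeL.comp (W.orthogonalProjectionOnto)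

instance infHOP (U V : Submodule ℝ X) [CompleteSpace U] [CompleteSpace V] :
    Submodule.HasOrthogonalProjection (U ⊓ V) := by
  have hU : IsClosed (U : Set X) := (completeSpace_coe_iff_isComplete.mp ‹_›).isClosed
  have hV : IsClosed (V : Set X) := (completeSpace_coe_iff_isComplete.mp ‹_›).isClosed
  have : CompleteSpace (U ⊓ V : Submodule ℝ X) := (hU.inter hV).completeSpace_coe
  infer_instance

/-- The fixed point set `Fix T = {x | T x = x}` of a continuous linear operator `T`,
as a submodule of `X`. -/
noncomputable def fixedSpace (T : X →L[ℝ] X) : Submodule ℝ X := LinearMap.ker ((T - 1 : X →L[ℝ] X) : X →ₗ[ℝ] X)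

instance fixedSpaceHOP (T : X →L[ℝ] X) : Submodule.HasOrthogonalProjection (fixedSpace T) := by
  have h : IsClosed ((fixedSpace T : Submodule ℝ X) : Set X) := by
    have : ((fixedSpace T : Submodule ℝ X) : Set X) = {x | T x = x} := by
      ext x; simp [fixedSpace, LinearMap.mem_ker, sub_eq_zero]
    rw [this]
    exact isClosed_eq T.continuous continuous_id
  have : CompleteSpace (fixedSpace T) := h.completeSpace_coe
  infer_instance

/-- The reflector `R_W = 2 P_W − Id` associated with `W`. -/
noncomputable def reflector (W : Submodule ℝ X) [Submodule.HasOrthogonalProjection W] : X →L[ℝ] X :=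
  2 • proj W - 1

/-- The Douglas–Rachford operator `T = T_{V,U} = P_V (2 P_U − Id) + Id − P_U`.
(The first argument is `U`, the second is `V`.) -/
noncomputable def drOperator (U V : Submodule ℝ X) [Submodule.HasOrthogonalProjection U]
    [Submodule.HasOrthogonalProjection V] : X →L[ℝ] X :=
  proj V * (2 • proj U - 1) + 1 - proj U

/-- The cosine of the Friedrichs angle between `U` and `V`. -/
noncomputable def friedrichs (U V : Submodule ℝ X) : ℝ :=
  sSup {c : ℝ | ∃ u v : X, u ∈ U ⊓ (U ⊓ V)ᗮ ∧ v ∈ V ⊓ (U ⊓ V)ᗮ ∧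
    ‖u‖ ≤ 1 ∧ ‖v‖ ≤ 1 ∧ c = inner ℝ u v}

section Aux
set_option linter.unusedSectionVars false

lemma proj_adjoint' (W : Submodule ℝ X) [CompleteSpace W] :
    ContinuousLinearMap.adjoint (proj W) = proj W := isSelfAdjoint_starProjection W

lemma proj_idem' (W : Submodule ℝ X) [CompleteSpace W] : proj W * proj W = proj W := by
  ext x
  simp [proj, ContinuousLinearMap.mul_apply, Submodule.orthogonalProjectionOnto_mem_subspace_eq_self,
    Submodule.starProjection_eq_self_iff, Submodule.starProjection_apply_mem]

lemma proj_orth' (W : Submodule ℝ X) [CompleteSpace W] : proj Wᗮ = 1 - proj W := by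
  have h := Submodule.id_eq_sum_starProjection_self_orthogonalComplement (𝕜 := ℝ) (K := W)
  have : (1 : X →L[ℝ] X) = proj W + proj Wᗮ := h
  rw [this]; abel

lemma dr_adjoint' (U V : Submodule ℝ X) [CompleteSpace U] [CompleteSpace V] :
    ContinuousLinearMap.adjoint (drOperator U V) =
      (2 • proj U - 1) * proj V + 1 - proj U := by
  have hU : star (proj U) = proj U := proj_adjoint' U
  have hV : star (proj V) = proj V := proj_adjoint' V
  rw [drOperator, ← ContinuousLinearMap.star_eq_adjoint]
  simp only [star_sub, star_add, star_mul, star_one, star_smul, hU, hV]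
  norm_num

end Aux

/-- `T T* = P_V P_U P_V + P_{V^⊥} P_{U^⊥} P_{V^⊥}
= P_V P_U + P_U P_V − P_U − P_V + Id = P_U P_V P_U + P_{U^⊥} P_{V^⊥} P_{U^⊥}`. -/
theorem drOperator_mul_adjoint
    (U V : Submodule ℝ X) [CompleteSpace U] [CompleteSpace V] :
    drOperator U V * ContinuousLinearMap.adjoint (drOperator U V) =
      proj V * proj U * proj V + proj Vᗮ * proj Uᗮ * proj Vᗮ ∧
    drOperator U V * ContinuousLinearMap.adjoint (drOperator U V) =
      proj V * proj U + proj U * proj V - proj U - proj V + 1 ∧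
    drOperator U V * ContinuousLinearMap.adjoint (drOperator U V) =
      proj U * proj V * proj U + proj Uᗮ * proj Vᗮ * proj Uᗮ := by
  rw [dr_adjoint' U V, drOperator, proj_orth' U, proj_orth' V]
  set A := proj U with hAdef
  set B := proj V with hBdef
  have hA : A * A = A := proj_idem' U
  have hB : B * B = B := proj_idem' V
  have hA' : ∀ x : X →L[ℝ] X, A * (A * x) = A * x := fun x => by rw [← mul_assoc, hA]
  have hB' : ∀ x : X →L[ℝ] X, B * (B * x) = B * x := fun x => by rw [← mul_assoc, hB]
  refine ⟨?_, ?_, ?_⟩ <;>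
  · noncomm_ring
    simp only [mul_assoc, hA, hB, hA', hB']
    abel
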